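/- On the reference tetrahedron K³, each face-based interior function Φ^{t,f_{j1}^i}_{m,n} (i ∈ {1,2}, m,n ≥ 0), defined by Φ^{t,f_{j1}^1}_{m,n} = ι (1−λ_{j2})^m (1−λ_{j2}−λ_{j3})^n P_m^{(2n+3,2)}(2λ_{j3}/(1−λ_{j2}) − 1) P_n^{(0,2)}(2λ_{j4}/(1−λ_{j2}−λ_{j3}) − 1) τ^{[j2,j3]}/|τ^{[j2,j3]}| and Φ^{t,f_{j1}^2}_{m,n} likewise with τ^{[j2,j4]}/|τ^{[j2,j4]}|, where ι = C_m^n λ_{j2} λ_{j3} λ_{j4}, satisfies: (i) its normal component vanishes at every point of each of the four faces of K³; (ii) its tangential trace vanishes on the other three faces, i.e. n^{f_{jk}} × Φ^{t,f_{j1}^i}_{m,n} = 0 at every point of f_{jk} for every jk ≠ j1; and (iii) it vanishes at every point of each of the six edges of K³. -/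

import Mathlib

open MeasureTheory
open scoped BigOperators

noncomputable section

/-- Vertices of the reference tetrahedron:
`v0 = (0,0,0)`, `v1 = (1,0,0)`, `v2 = (0,1,0)`, `v3 = (0,0,1)`. -/
def vtx : Fin 4 → Fin 3 → ℝ := ![![0,0,0], ![1,0,0], ![0,1,0], ![0,0,1]]

/-- Barycentric coordinates `λ0 = 1−ξ−η−ζ`, `λ1 = ξ`, `λ2 = η`, `λ3 = ζ`. -/
def lam : Fin 4 → (Fin 3 → ℝ) → ℝ :=
  ![fun p => 1 - p 0 - p 1 - p 2, fun p => p 0, fun p => p 1, fun p => p 2]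

/-- The (constant) gradients `∇λ_i`. -/
def gradLam : Fin 4 → Fin 3 → ℝ := ![![-1,-1,-1], ![1,0,0], ![0,1,0], ![0,0,1]]

/-- The reference tetrahedron `K³ = {(ξ,η,ζ) : ξ,η,ζ ≥ 0, ξ+η+ζ ≤ 1}`. -/
def K3 : Set (Fin 3 → ℝ) := {p | 0 ≤ p 0 ∧ 0 ≤ p 1 ∧ 0 ≤ p 2 ∧ p 0 + p 1 + p 2 ≤ 1}

/-- Cross product in ℝ³. -/
def cross3 (u v : Fin 3 → ℝ) : Fin 3 → ℝ :=
  ![u 1 * v 2 - u 2 * v 1, u 2 * v 0 - u 0 * v 2, u 0 * v 1 - u 1 * v 0]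

/-- Euclidean norm in ℝ³. -/
def norm3 (u : Fin 3 → ℝ) : ℝ := Real.sqrt (∑ i, u i ^ 2)

/-- Euclidean dot product in ℝ³. -/
def dot3 (u v : Fin 3 → ℝ) : ℝ := ∑ i, u i * v i

/-- The unit vector in the direction of `u`. -/
def unitV (u : Fin 3 → ℝ) : Fin 3 → ℝ := (norm3 u)⁻¹ • u

/-- The outward unit normal of the face `f_j` of `K³` opposite the vertex
`v_j` (that face lies in the plane `λ_j = 0`): `n^{f_j} = −∇λ_j / |∇λ_j|`. -/
def nFace (j : Fin 4) : Fin 3 → ℝ := (norm3 (gradLam j))⁻¹ • (-(gradLam j))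

/-- The classical (un-normalized) Jacobi polynomial `P_n^{(a,b)}` in homogenized
(cleared-denominator) form: `jacobiHom n a b u w = w^n P_n^{(a,b)}(u/w)` for
`w ≠ 0`, via the explicit sum
`P_n^{(a,b)}(x) = ∑_{s} C(n+a, n−s) C(n+b, s) ((x−1)/2)^s ((x+1)/2)^{n−s}`. -/
def jacobiHom (n a b : ℕ) (u w : ℝ) : ℝ :=
  ∑ k ∈ Finset.range (n+1),
    (((n+a).choose (n-k) : ℝ)) * (((n+b).choose k : ℝ)) *
      ((u - w)/2)^k * ((u + w)/2)^(n-k)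

/-- The degree-`n` Legendre polynomial `ℓ_n` (normalized so `ℓ_n(1) = 1`). -/
def legendre (n : ℕ) (x : ℝ) : ℝ := jacobiHom n 0 0 x 1

/-- Normalization constant
`C_m^n = √((2n+3)(m+n+3)(m+2n+4)(m+2n+5)(2m+2n+7)(2m+2n+8)(2m+2n+9)) / √((m+1)(m+2))`. -/
def Cmn (m n : ℕ) : ℝ :=
  Real.sqrt
    (((2*n+3)*(m+n+3)*(m+2*n+4)*(m+2*n+5)*(2*m+2*n+7)*(2*m+2*n+8)*(2*m+2*n+9) : ℕ) : ℝ) /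
  Real.sqrt (((m+1)*(m+2) : ℕ) : ℝ)

/-- Face-based interior function `Φ^{t,f_{j1}^i}_{m,n}` (`i ∈ {1,2}`), with
direction `τ^{[j2,j3]}/|τ^{[j2,j3]}|` for `i = 1` (here `i = 0 : Fin 2`) and
`τ^{[j2,j4]}/|τ^{[j2,j4]}|` for `i = 2`, where `ι = C_m^n λ_{j2} λ_{j3} λ_{j4}`. -/
def faceInt (j2 j3 j4 : Fin 4) (i : Fin 2) (m n : ℕ) (p : Fin 3 → ℝ) : Fin 3 → ℝ :=
  (Cmn m n * lam j2 p * lam j3 p * lam j4 p *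
    jacobiHom m (2*n+3) 2 (2 * lam j3 p - (1 - lam j2 p)) (1 - lam j2 p) *
    jacobiHom n 0 2 (2 * lam j4 p - (1 - lam j2 p - lam j3 p))
      (1 - lam j2 p - lam j3 p)) •
  (if i = 0 then unitV (vtx j3 - vtx j2) else unitV (vtx j4 - vtx j2))

lemma lam_vtx : ∀ j a : Fin 4, lam j (vtx a) = if j = a then 1 else 0 := by
  intro j a; fin_cases j <;> fin_cases a <;> norm_num [lam, vtx, Fin.ext_iff, Matrix.cons_val_two, Matrix.tail_cons, Matrix.head_cons]

lemma lam_affine (j : Fin 4) (x y : Fin 3 → ℝ) (u v : ℝ) (h : u + v = 1) :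
    lam j (u • x + v • y) = u * lam j x + v * lam j y := by
  have hv : v = 1 - u := by linarith
  subst hv
  fin_cases j <;> simp [lam] <;> ring

lemma lam_edge (j a b : Fin 4) (hja : j ≠ a) (hjb : j ≠ b) (p : Fin 3 → ℝ)
    (hp : p ∈ segment ℝ (vtx a) (vtx b)) : lam j p = 0 := by
  obtain ⟨u, v, hu, hv, huv, rfl⟩ := hp
  rw [lam_affine j _ _ u v huv, lam_vtx, lam_vtx, if_neg hja, if_neg hjb]
  ring

lemma faceInt_zero (j2 j3 j4 : Fin 4) (i : Fin 2) (m n : ℕ) (p : Fin 3 → ℝ)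
    (h : lam j2 p = 0 ∨ lam j3 p = 0 ∨ lam j4 p = 0) :
    faceInt j2 j3 j4 i m n p = 0 := by
  rcases h with h | h | h <;> simp [faceInt, h]

lemma cross3_zero (v : Fin 3 → ℝ) : cross3 v 0 = 0 := by
  funext i; fin_cases i <;> simp [cross3]

lemma dot3_zero (v : Fin 3 → ℝ) : dot3 v 0 = 0 := by simp [dot3]

lemma dot3_smul_right (v : Fin 3 → ℝ) (c : ℝ) (w : Fin 3 → ℝ) :
    dot3 v (c • w) = c * dot3 v w := by
  unfold dot3
  rw [Finset.mul_sum]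
  refine Finset.sum_congr rfl fun i _ => ?_
  simp [mul_comm, mul_left_comm]

lemma dot3_smul_left (c : ℝ) (v w : Fin 3 → ℝ) :
    dot3 (c • v) w = c * dot3 v w := by
  unfold dot3
  rw [Finset.mul_sum]
  refine Finset.sum_congr rfl fun i _ => ?_
  simp [mul_assoc]

lemma dot3_neg_left (v w : Fin 3 → ℝ) : dot3 (-v) w = -dot3 v w := by
  simp [dot3, neg_mul]

lemma gdot : ∀ j a b : Fin 4, j ≠ a → j ≠ b →
    dot3 (gradLam j) (vtx b - vtx a) = 0 := by
  intro j a b hja hjb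
  fin_cases j <;> fin_cases a <;> fin_cases b <;>
    simp_all [dot3, gradLam, vtx, Fin.sum_univ_three]

lemma cover : ∀ j1 j2 j3 j4 : Fin 4, j2 ≠ j1 → j3 ≠ j1 → j4 ≠ j1 →
    j2 < j3 → j3 < j4 → ∀ j : Fin 4, j = j1 ∨ j = j2 ∨ j = j3 ∨ j = j4 := by
  decide

lemma edgeAvoid : ∀ j2 j3 j4 a b : Fin 4, j2 < j3 → j3 < j4 →
    (j2 ≠ a ∧ j2 ≠ b) ∨ (j3 ≠ a ∧ j3 ≠ b) ∨ (j4 ≠ a ∧ j4 ≠ b) := by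
  decide

/-- each face-based interior function attached to the face
`f_{j1} = [j2,j3,j4]` (i) has vanishing normal component at every point of
each of the four faces of `K³`, (ii) has vanishing tangential trace
(`n^{f_{jk}} × Φ = 0`) at every point of every face `f_{jk}` with `jk ≠ j1`,
and (iii) vanishes at every point of each of the six edges of `K³`. -/
theorem stmt17 : ∀ (j1 j2 j3 j4 : Fin 4), j2 ≠ j1 → j3 ≠ j1 → j4 ≠ j1 →
    j2 < j3 → j3 < j4 → ∀ i : Fin 2, ∀ m n : ℕ,
    (∀ j : Fin 4, ∀ p ∈ K3, lam j p = 0 →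
      dot3 (nFace j) (faceInt j2 j3 j4 i m n p) = 0) ∧
    (∀ jk : Fin 4, jk ≠ j1 → ∀ p ∈ K3, lam jk p = 0 →
      cross3 (nFace jk) (faceInt j2 j3 j4 i m n p) = 0) ∧
    (∀ (a b : Fin 4), a < b → ∀ p ∈ segment ℝ (vtx a) (vtx b),
      faceInt j2 j3 j4 i m n p = 0) := by
  intro j1 j2 j3 j4 h2 h3 h4 h23 h34 i m n
  have key : ∀ X : Fin 4, X ≠ j1 → dot3 (nFace j1) (unitV (vtx X - vtx j2)) = 0 := by
    intro X hX
    unfold nFace unitV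
    rw [dot3_smul_left, dot3_smul_right, dot3_neg_left, gdot j1 j2 X h2.symm hX.symm]
    ring
  refine ⟨?_, ?_, ?_⟩
  · intro j p hp hl
    rcases cover j1 j2 j3 j4 h2 h3 h4 h23 h34 j with rfl | rfl | rfl | rfl
    · rw [faceInt, dot3_smul_right]
      split_ifs with hi
      · rw [key j3 h3]; ring
      · rw [key j4 h4]; ring
    · rw [faceInt_zero _ _ _ _ _ _ _ (Or.inl hl), dot3_zero]
    · rw [faceInt_zero _ _ _ _ _ _ _ (Or.inr (Or.inl hl)), dot3_zero]
    · rw [faceInt_zero _ _ _ _ _ _ _ (Or.inr (Or.inr hl)), dot3_zero]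
  · intro jk hk p hp hl
    rcases cover j1 j2 j3 j4 h2 h3 h4 h23 h34 jk with rfl | rfl | rfl | rfl
    · exact absurd rfl hk
    · rw [faceInt_zero _ _ _ _ _ _ _ (Or.inl hl), cross3_zero]
    · rw [faceInt_zero _ _ _ _ _ _ _ (Or.inr (Or.inl hl)), cross3_zero]
    · rw [faceInt_zero _ _ _ _ _ _ _ (Or.inr (Or.inr hl)), cross3_zero]
  · intro a b hab p hp
    rcases edgeAvoid j2 j3 j4 a b h23 h34 with ⟨ha, hb⟩ | ⟨ha, hb⟩ | ⟨ha, hb⟩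
    · exact faceInt_zero _ _ _ _ _ _ _ (Or.inl (lam_edge _ _ _ ha hb p hp))
    · exact faceInt_zero _ _ _ _ _ _ _ (Or.inr (Or.inl (lam_edge _ _ _ ha hb p hp)))
    · exact faceInt_zero _ _ _ _ _ _ _ (Or.inr (Or.inr (lam_edge _ _ _ ha hb p hp)))
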